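/- arXiv:1808.10321 — 4 statements merged into one kernel-verified Lean document; each statement's English description precedes it below -/
import Mathlib

section
/- Let L be a positive definite unimodular lattice and w ∈ L. Then w is extremal (i.e., w has minimal norm in its coset w + 2L) if and only if for all u ∈ L with u·u < (w·w)/2 we have |u·w| ≤ u·u. -/
/-- For a positive definite unimodular lattice `L` with bilinear form `B`,
`w` is extremal (minimal norm in its coset `w + 2L`) iff for all `u` with
`u·u < (w·w)/2` we have `|u·w| ≤ u·u`. -/
theorem extremal_iff
    {L : Type*} [AddCommGroup L] [Module ℤ L] [Module.Free ℤ L] [Module.Finite ℤ L]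
    (B : L →ₗ[ℤ] L →ₗ[ℤ] ℤ)
    (hsymm : ∀ x y : L, B x y = B y x)
    (hposdef : ∀ x : L, x ≠ 0 → 0 < B x x)
    (hunimodular : Function.Bijective fun x : L => B x) (w : L) :
    (∀ u : L, B w w ≤ B (w + 2 • u) (w + 2 • u)) ↔
      (∀ u : L, 2 * B u u < B w w → |B u w| ≤ B u u) := by
  have expand : ∀ x u : L, B (x + 2 • u) (x + 2 • u) = B x x + 4 * B u x + 4 * B u u := by
    intro x u
    rw [two_smul ℕ u]
    simp only [map_add, LinearMap.add_apply]
    have := hsymm x u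
    linarith
  have hnonneg : ∀ x : L, 0 ≤ B x x := by
    intro x
    rcases eq_or_ne x 0 with h | h
    · simp [h]
    · exact (hposdef x h).le
  -- extremal of any vector gives the unconditional bound
  have key : ∀ v : L, (∀ u : L, B v v ≤ B (v + 2 • u) (v + 2 • u)) →
      ∀ u : L, |B u v| ≤ B u u := by
    intro v hext u
    have h1 := hext u
    have h2 := hext (-u)
    rw [expand v u] at h1
    rw [expand v (-u)] at h2
    simp only [map_neg, LinearMap.neg_apply, neg_neg] at h2
    rw [abs_le]
    constructor <;> linarith
  constructor
  · intro hext u _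
    exact key w hext u
  · intro H
    by_contra hc
    push_neg at hc
    obtain ⟨u1, hu1⟩ := hc
    -- the set of norms of vectors in the coset w + 2L
    set S : Set ℕ := {n | ∃ z : L, (B (w + 2 • z) (w + 2 • z)).toNat = n} with hS
    have hne : S.Nonempty := ⟨_, u1, rfl⟩
    obtain ⟨z0, hz0⟩ := Nat.sInf_mem hne
    set v : L := w + 2 • z0 with hv
    have hmin : ∀ z : L, B v v ≤ B (w + 2 • z) (w + 2 • z) := by
      intro z
      have h1 : sInf S ≤ (B (w + 2 • z) (w + 2 • z)).toNat := Nat.sInf_le ⟨z, rfl⟩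
      rw [← hz0] at h1
      have h2 := hnonneg v
      have h3 := hnonneg (w + 2 • z)
      omega
    -- v is extremal in the coset
    have hvext : ∀ z : L, B v v ≤ B (v + 2 • z) (v + 2 • z) := by
      intro z
      have : v + 2 • z = w + 2 • (z0 + z) := by
        rw [hv, smul_add]; abel
      rw [this]
      exact hmin (z0 + z)
    set u : L := -z0 with hu
    have hw : w = v + 2 • u := by
      rw [hv, hu, smul_neg]; abel
    set a : ℤ := B u u with ha
    set b : ℤ := B u v with hb
    set c : ℤ := B v v with hc2
    have hBww : B w w = c + 4 * b + 4 * a := by rw [hw]; exact expand v u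
    have hab : 0 < a + b := by
      have h1 : c ≤ B (w + 2 • u1) (w + 2 • u1) := hmin u1
      have h2 : B (w + 2 • u1) (w + 2 • u1) < B w w := hu1
      omega
    have hbge : -a ≤ b := by
      have := key v hvext u
      rw [abs_le] at this
      exact this.1
    rcases lt_or_ge c (2 * a) with hca | hca
    · -- use u0 = u + v
      have hu0u0 : B (u + v) (u + v) = a + 2 * b + c := by
        simp only [map_add, LinearMap.add_apply]
        have := hsymm u v
        linarith
      have hu0w : B (u + v) w = 2 * a + 3 * b + c := by
        rw [hw, two_smul ℕ u]
        simp only [map_add, LinearMap.add_apply]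
        have := hsymm u v
        linarith
      have hcond : 2 * B (u + v) (u + v) < B w w := by
        rw [hu0u0, hBww]; linarith
      have := H (u + v) hcond
      rw [hu0w, hu0u0] at this
      have h2 : (2 * a + 3 * b + c : ℤ) ≤ |2 * a + 3 * b + c| := le_abs_self _
      linarith
    · -- use u0 = u
      have huw : B u w = b + 2 * a := by
        rw [hw, two_smul ℕ u]
        simp only [map_add, LinearMap.add_apply]
        linarith
      have hcond : 2 * B u u < B w w := by
        rw [← ha, hBww]; linarith
      have := H u hcond
      rw [huw, ← ha] at this
      have h2 : (b + 2 * a : ℤ) ≤ |b + 2 * a| := le_abs_self _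
      linarith
end

section
/- Let L be a positive definite lattice, let w ∈ L be extremal with even norm m = w·w, and for i ∈ ℤ define S_i^w = {u ∈ L : u·u = i = -u·w}. Then the map u ↦ -w - u is a bijection from S_i^w to S_{m-i}^w; in particular |S_i^w| = |S_{m-i}^w| for all i, and S_i^w is empty for i > m. -/
/-- For a positive definite lattice `L`, extremal `w` of even norm `m`,
and `S i = {u | u·u = i = -u·w}`, the map `u ↦ -w - u` is a bijection from `S i`
onto `S (m - i)`; in particular `|S i| = |S (m - i)|` and `S i = ∅` for `i > m`. -/
theorem S_bijection
    {L : Type*} [AddCommGroup L] [Module ℤ L] [Module.Free ℤ L] [Module.Finite ℤ L]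
    (B : L →ₗ[ℤ] L →ₗ[ℤ] ℤ)
    (hsymm : ∀ x y : L, B x y = B y x)
    (hposdef : ∀ x : L, x ≠ 0 → 0 < B x x)
    (w : L)
    (hextremal : ∀ u : L, B w w ≤ B (w + 2 • u) (w + 2 • u))
    (m : ℤ) (hm : m = B w w) (hmeven : Even m)
    (S : ℤ → Set L) (hS : S = fun i => {u : L | B u u = i ∧ B u w = -i}) :
    (∀ i : ℤ, Set.BijOn (fun u : L => -w - u) (S i) (S (m - i))) ∧
    (∀ i : ℤ, Nat.card (S i) = Nat.card (S (m - i))) ∧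
    (∀ i : ℤ, m < i → S i = ∅) := by
  subst hm hS
  have nonneg : ∀ x : L, 0 ≤ B x x := by
    intro x
    by_cases hx : x = 0
    · simp [hx]
    · exact le_of_lt (hposdef x hx)
  have expand : ∀ u : L, B (-w - u) (-w - u) = B w w + B u w + B u w + B u u := by
    intro u
    simp only [map_sub, map_neg, LinearMap.sub_apply, LinearMap.neg_apply]
    rw [hsymm w u]
    ring
  have expand2 : ∀ u : L, B (-w - u) w = -(B w w) - B u w := by
    intro u
    simp only [map_sub, map_neg, LinearMap.sub_apply, LinearMap.neg_apply]
  have maps : ∀ i : ℤ, ∀ u : L, u ∈ {u : L | B u u = i ∧ B u w = -i} →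
      (-w - u) ∈ {u : L | B u u = B w w - i ∧ B u w = -(B w w - i)} := by
    rintro i u ⟨h1, h2⟩
    constructor
    · rw [expand, h1, h2]; ring
    · rw [expand2, h2]; ring
  have invol : ∀ u : L, -w - (-w - u) = u := by intro u; abel
  have bij : ∀ i : ℤ, Set.BijOn (fun u : L => -w - u)
      {u : L | B u u = i ∧ B u w = -i} {u : L | B u u = B w w - i ∧ B u w = -(B w w - i)} := by
    intro i
    refine ⟨maps i, ?_, ?_⟩
    · intro a _ b _ hab
      have : -w - (-w - a) = -w - (-w - b) := by simp only at hab; rw [hab]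
      rwa [invol, invol] at this
    · intro v hv
      refine ⟨-w - v, ?_, invol v⟩
      have := maps (B w w - i) v hv
      simpa using this
  refine ⟨bij, ?_, ?_⟩
  · intro i
    exact Nat.card_eq_of_bijective _ ((bij i).bijective)
  · intro i hi
    ext u
    simp only [Set.mem_setOf_eq, Set.mem_empty_iff_false, iff_false]
    rintro ⟨h1, h2⟩
    have := maps i u ⟨h1, h2⟩
    have hn := nonneg (-w - u)
    rw [this.1] at hn
    omega
end

section
/- Let L ⊂ ℚ^{24} be the lattice generated by D_24 = {x ∈ ℤ^{24} : Σx_i even} and the glue vector g = (1/2, …, 1/2). Then g·g = 6, g is extremal in L (minimal norm in g + 2L), and Min(g + 2L) = {g, -g}. -/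
/-- The standard inner product on `ℚ^n`. -/
def qip {n : ℕ} (x y : Fin n → ℚ) : ℚ := ∑ i, x i * y i

/-- A rational vector with all coordinates integral. -/
def isIntVec {n : ℕ} (x : Fin n → ℚ) : Prop := ∀ i, ∃ m : ℤ, x i = (m : ℚ)

/-- The root lattice `D_24` inside `ℚ^24`: integer vectors with even coordinate sum. -/
def D24set : Set (Fin 24 → ℚ) :=
  {x | isIntVec x ∧ ∃ m : ℤ, (∑ i, x i) = 2 * (m : ℚ)}

/-- The glue vector `g = (1/2, …, 1/2)`. -/
def glueD24 : Fin 24 → ℚ := fun _ => 1 / 2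

/-- The Niemeier lattice `D_24`, generated by the root lattice `D_24` and `g`. -/
def NiemeierD24 : AddSubgroup (Fin 24 → ℚ) :=
  AddSubgroup.closure (D24set ∪ {glueD24})

def Pprop (u : Fin 24 → ℚ) : Prop :=
  (∀ i, ∃ m : ℤ, 2 * u i = m) ∧ (∀ i j, ∃ m : ℤ, u i - u j = m)

lemma memP (u : Fin 24 → ℚ) (hu : u ∈ NiemeierD24) : Pprop u := by
  induction hu using AddSubgroup.closure_induction with
  | mem x hx =>
    rcases hx with ⟨hint, -⟩ | hx
    · constructor
      · intro i; obtain ⟨m, hm⟩ := hint i; exact ⟨2*m, by rw [hm]; push_cast; ring⟩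
      · intro i j
        obtain ⟨m, hm⟩ := hint i; obtain ⟨m', hm'⟩ := hint j
        exact ⟨m - m', by rw [hm, hm']; push_cast; ring⟩
    · simp only [Set.mem_singleton_iff] at hx
      subst hx
      exact ⟨fun i => ⟨1, by norm_num [glueD24]⟩, fun i j => ⟨0, by norm_num [glueD24]⟩⟩
  | zero => exact ⟨fun i => ⟨0, by simp⟩, fun i j => ⟨0, by simp⟩⟩
  | add a b ha hb pa pb =>
    exact ⟨fun i => (pa.1 i).elim fun m hm => (pb.1 i).elim fun m' hm' =>
        ⟨m + m', by simp only [Pi.add_apply]; push_cast; rw [← hm, ← hm']; ring⟩,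
      fun i j => (pa.2 i j).elim fun m hm => (pb.2 i j).elim fun m' hm' =>
        ⟨m + m', by simp only [Pi.add_apply]; push_cast; rw [← hm, ← hm']; ring⟩⟩
  | neg a ha pa =>
    exact ⟨fun i => (pa.1 i).elim fun m hm =>
        ⟨-m, by simp only [Pi.neg_apply]; push_cast; rw [← hm]; ring⟩,
      fun i j => (pa.2 i j).elim fun m hm =>
        ⟨-m, by simp only [Pi.neg_apply]; push_cast; rw [← hm]; ring⟩⟩

lemma coord_eq (u : Fin 24 → ℚ) (i : Fin 24) :
    (glueD24 + 2 • u) i = 1/2 + 2 * u i := by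
  simp [glueD24, Pi.add_apply, Pi.smul_apply, smul_eq_mul]

lemma term_lb (m : ℤ) : (1/4 : ℚ) ≤ (1/2 + (m:ℚ)) * (1/2 + (m:ℚ)) := by
  have h : (0:ℤ) ≤ m * (m + 1) := by rcases le_or_gt 0 m with h | h <;> nlinarith
  have h' : (0:ℚ) ≤ (m:ℚ) * ((m:ℚ) + 1) := by exact_mod_cast h
  nlinarith

lemma qip_lb (u : Fin 24 → ℚ) (hp : Pprop u) :
    6 ≤ qip (glueD24 + 2 • u) (glueD24 + 2 • u) := by
  have key : ∀ i : Fin 24, (1/4 : ℚ) ≤ (glueD24 + 2 • u) i * (glueD24 + 2 • u) i := by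
    intro i
    obtain ⟨m, hm⟩ := hp.1 i
    rw [coord_eq, hm]
    exact term_lb m
  calc (6:ℚ) = ∑ _i : Fin 24, (1/4 : ℚ) := by simp; norm_num
    _ ≤ _ := Finset.sum_le_sum (fun i _ => key i)

lemma qip_g : qip glueD24 glueD24 = 6 := by
  simp [qip, glueD24]; norm_num

lemma eq_case (u : Fin 24 → ℚ) (hp : Pprop u)
    (h6 : qip (glueD24 + 2 • u) (glueD24 + 2 • u) ≤ 6) :
    glueD24 + 2 • u = glueD24 ∨ glueD24 + 2 • u = -glueD24 := by
  set z := glueD24 + 2 • u with hz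
  have hge := qip_lb u hp
  have heq : qip z z = 6 := le_antisymm h6 hge
  -- each term equals 1/4
  have hterm : ∀ i : Fin 24, z i * z i = 1/4 := by
    have hsum : ∑ i : Fin 24, (z i * z i - 1/4) = 0 := by
      have : ∑ i : Fin 24, (z i * z i - 1/4) = qip z z - 6 := by
        rw [qip, Finset.sum_sub_distrib]; simp; norm_num
      rw [this, heq]; ring
    have hnn : ∀ i ∈ Finset.univ, (0:ℚ) ≤ z i * z i - 1/4 := by
      intro i _
      obtain ⟨m, hm⟩ := hp.1 i
      have : z i = 1/2 + (m:ℚ) := by rw [hz, coord_eq, hm]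
      rw [this]; linarith [term_lb m]
    intro i
    have := (Finset.sum_eq_zero_iff_of_nonneg hnn).mp hsum i (Finset.mem_univ i)
    linarith
  -- each coordinate is ±1/2
  have hpm : ∀ i : Fin 24, z i = 1/2 ∨ z i = -1/2 := by
    intro i
    obtain ⟨m, hm⟩ := hp.1 i
    have hzi : z i = 1/2 + (m:ℚ) := by rw [hz, coord_eq, hm]
    have := hterm i
    rw [hzi] at this ⊢
    have hmm : (m:ℚ) * ((m:ℚ) + 1) = 0 := by nlinarith
    have : m * (m + 1) = 0 := by exact_mod_cast hmm
    rcases mul_eq_zero.mp this with h | h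
    · left; rw [h]; norm_num
    · right; have : m = -1 := by omega
      rw [this]; norm_num
  -- differences rule out mixing
  have hdiff : ∀ i j : Fin 24, z i = z j := by
    intro i j
    obtain ⟨m, hm⟩ := hp.2 i j
    have h2 : z i - z j = 2 * (m:ℚ) := by
      rw [hz, coord_eq, coord_eq]; rw [← hm]; ring
    rcases hpm i with hi | hi <;> rcases hpm j with hj | hj
    · rw [hi, hj]
    · exfalso
      rw [hi, hj] at h2
      have h3 : (2:ℚ) * m = 1 := by linarith
      have h4 : (2:ℤ) * m = 1 := by exact_mod_cast h3
      omega
    · exfalso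
      rw [hi, hj] at h2
      have h3 : (2:ℚ) * m = -1 := by linarith
      have h4 : (2:ℤ) * m = -1 := by exact_mod_cast h3
      omega
    · rw [hi, hj]
  rcases hpm 0 with h0 | h0
  · left; funext i
    rw [hdiff i 0, h0]; simp [glueD24]
  · right; funext i
    rw [hdiff i 0, h0]; simp [glueD24]; norm_num

/-- `g·g = 6`, `g` is extremal in the Niemeier lattice `D_24`,
and `Min(g + 2L) = {g, -g}`. -/
theorem niemeierD24_glue_extremal :
    qip glueD24 glueD24 = 6 ∧
    (∀ u ∈ NiemeierD24,
      qip glueD24 glueD24 ≤ qip (glueD24 + 2 • u) (glueD24 + 2 • u)) ∧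
    {z : Fin 24 → ℚ | (∃ u ∈ NiemeierD24, z = glueD24 + 2 • u) ∧
        ∀ z' : Fin 24 → ℚ, (∃ u ∈ NiemeierD24, z' = glueD24 + 2 • u) →
          qip z z ≤ qip z' z'} = {glueD24, -glueD24} := by
  have hgmem : glueD24 ∈ NiemeierD24 :=
    AddSubgroup.subset_closure (Or.inr rfl)
  have hngmem : -glueD24 ∈ NiemeierD24 := AddSubgroup.neg_mem _ hgmem
  have hg0 : glueD24 = glueD24 + 2 • (0 : Fin 24 → ℚ) := by simp
  have hgneg : -glueD24 = glueD24 + 2 • (-glueD24) := by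
    funext i; simp [glueD24]; norm_num
  refine ⟨qip_g, ?_, ?_⟩
  · intro u hu
    rw [qip_g]
    exact qip_lb u (memP u hu)
  · ext z
    simp only [Set.mem_setOf_eq, Set.mem_insert_iff, Set.mem_singleton_iff]
    constructor
    · rintro ⟨⟨u, hu, rfl⟩, hmin⟩
      have h6 : qip (glueD24 + 2 • u) (glueD24 + 2 • u) ≤ 6 := by
        have := hmin glueD24 ⟨0, AddSubgroup.zero_mem _, hg0⟩
        rwa [qip_g] at this
      exact eq_case u (memP u hu) h6
    · rintro (rfl | rfl)
      · refine ⟨⟨0, AddSubgroup.zero_mem _, hg0⟩, ?_⟩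
        rintro z' ⟨u, hu, rfl⟩
        rw [qip_g]
        exact qip_lb u (memP u hu)
      · refine ⟨⟨-glueD24, hngmem, hgneg⟩, ?_⟩
        rintro z' ⟨u, hu, rfl⟩
        have : qip (-glueD24) (-glueD24) = 6 := by
          simp [qip, glueD24]; norm_num
        rw [this]
        exact qip_lb u (memP u hu)
end

section
/- Let v = 5h - e_1 - ⋯ - e_{24} in ℤ^{1,24}. Then v·v = 1, and the orthogonal complement of v contains the roots e_1-e_2, …, e_{23}-e_{24}, and 5h - 2e_1 - e_2 - ⋯ - e_{24}, which span a copy of the negative root lattice -A_24; moreover the complement is an even negative definite unimodular lattice of rank 24. -/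
/-- The Lorentzian form on `ℤ^{1,24}`, coordinates `(h, e_1, …, e_24)`. -/
def lor (x y : Fin 25 → ℤ) : ℤ := x 0 * y 0 - ∑ i : Fin 24, x i.succ * y i.succ

/-- The class `v = 5h - e_1 - ⋯ - e_24`, in coordinates `(5, -1, …, -1)`. -/
def vA24 : Fin 25 → ℤ := fun i => if i.val = 0 then 5 else -1

/-- The 24 listed roots: `e_1-e_2, …, e_23-e_24` and `5h - 2e_1 - e_2 - ⋯ - e_24`. -/
def rA24 : Fin 24 → Fin 25 → ℤ := fun k i =>
  if k.val < 23 then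
    (if i.val = k.val + 1 then 1 else if i.val = k.val + 2 then -1 else 0)
  else
    (if i.val = 0 then 5 else if i.val = 1 then -2 else -1)

/-- The standard inner product on `ℤ^25`. -/
def zip25 (x y : Fin 25 → ℤ) : ℤ := ∑ i, x i * y i

/-- The root lattice `A_24 = {x ∈ ℤ^25 : Σ x_i = 0}`. -/
def A24Z : Set (Fin 25 → ℤ) := {x | (∑ i, x i) = 0}

/-! ### Auxiliary definitions and lemmas -/

/-- The embedding `x ↦ (5x_0, x_1 - x_0, …, x_24 - x_0)` of `A_24` into `v^⊥`. -/
def fmap : (Fin 25 → ℤ) →ₗ[ℤ] (Fin 25 → ℤ) where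
  toFun x := fun j => if j.val = 0 then 5 * x 0 else x j - x 0
  map_add' x y := by funext j; by_cases h : j.val = 0 <;> simp only [Fin.val_eq_zero_iff] at h <;> simp [h] <;> ring
  map_smul' a x := by funext j; by_cases h : j.val = 0 <;> simp only [Fin.val_eq_zero_iff] at h <;> simp [h] <;> ring

lemma fmap_zero (x : Fin 25 → ℤ) : fmap x 0 = 5 * x 0 := rfl

lemma fmap_succ (x : Fin 25 → ℤ) (i : Fin 24) : fmap x i.succ = x i.succ - x 0 := by
  simp [fmap, Fin.val_succ]

lemma lor_v (x : Fin 25 → ℤ) : lor x vA24 = 5 * x 0 + ∑ i : Fin 24, x i.succ := by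
  simp [lor, vA24, Fin.val_succ]; ring

lemma sum_succ_of_mem (x : Fin 25 → ℤ) (hx : x ∈ A24Z) :
    ∑ i : Fin 24, x i.succ = -x 0 := by
  have h : (∑ i, x i) = 0 := hx
  rw [Fin.sum_univ_succ] at h
  linarith

lemma lor_fmap_v (x : Fin 25 → ℤ) (hx : x ∈ A24Z) : lor (fmap x) vA24 = 0 := by
  have hs := sum_succ_of_mem x hx
  rw [lor_v]
  simp only [fmap_succ, fmap_zero, Finset.sum_sub_distrib, Finset.sum_const, Finset.card_univ,
    Fintype.card_fin, nsmul_eq_mul, hs]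
  push_cast
  ring

lemma lor_fmap_fmap (x : Fin 25 → ℤ) (hx : x ∈ A24Z) (y : Fin 25 → ℤ) (hy : y ∈ A24Z) :
    lor (fmap x) (fmap y) = -(zip25 x y) := by
  have hsx := sum_succ_of_mem x hx
  have hsy := sum_succ_of_mem y hy
  have key : ∑ i : Fin 24, (x i.succ - x 0) * (y i.succ - y 0)
      = ∑ i : Fin 24, x i.succ * y i.succ - x 0 * (∑ i : Fin 24, y i.succ)
        - (∑ i : Fin 24, x i.succ) * y 0 + 24 * (x 0 * y 0) := by
    have e : ∀ i : Fin 24, (x i.succ - x 0) * (y i.succ - y 0)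
        = x i.succ * y i.succ - x 0 * y i.succ - x i.succ * y 0 + x 0 * y 0 :=
      fun i => by ring
    simp only [e, Finset.sum_add_distrib, Finset.sum_sub_distrib, ← Finset.mul_sum,
      ← Finset.sum_mul, Finset.sum_const, Finset.card_univ, Fintype.card_fin, nsmul_eq_mul]
    push_cast
    ring
  have hz : zip25 x y = x 0 * y 0 + ∑ i : Fin 24, x i.succ * y i.succ := by
    rw [zip25, Fin.sum_univ_succ]
  simp only [lor, fmap_zero, fmap_succ, key, hsx, hsy, hz]
  ring

/-- `yv j = δ_j - δ_24`. -/
def yv : Fin 25 → Fin 25 → ℤ := fun j i => (if i = j then 1 else 0) - (if i.val = 24 then 1 else 0)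

/-- Coefficients expressing `fmap (yv j)` in the roots. -/
def ycoef : Fin 25 → Fin 24 → ℤ := fun j k =>
  if j.val = 0 then 1
  else if j.val = 24 then 0
  else if j.val - 1 ≤ k.val ∧ k.val ≤ 22 then 1 else 0

set_option maxHeartbeats 2000000 in
lemma fmap_yv_eq : ∀ j : Fin 25, fmap (yv j) = ∑ k : Fin 24, ycoef j k • rA24 k := by decide

lemma fmap_yv_mem (j : Fin 25) : fmap (yv j) ∈ Submodule.span ℤ (Set.range rA24) := by
  rw [fmap_yv_eq j]
  exact Submodule.sum_smul_mem _ _ (fun k _ => Submodule.subset_span ⟨k, rfl⟩)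

lemma eq_sum_yv (x : Fin 25 → ℤ) (hx : x ∈ A24Z) : x = ∑ j : Fin 25, x j • yv j := by
  have h : (∑ i, x i) = 0 := hx
  funext i
  simp only [Finset.sum_apply, Pi.smul_apply, smul_eq_mul, yv, mul_sub, mul_ite, mul_one,
    mul_zero, Finset.sum_sub_distrib]
  by_cases hi : (i : ℕ) = 24
  · simp only [hi, if_true]
    rw [Finset.sum_ite_eq Finset.univ i x]
    simp [h]
  · simp only [hi, if_false]
    rw [Finset.sum_ite_eq Finset.univ i x]
    simp

/-- The basis `b_0 = δ_0 - 5δ_24`, `b_k = δ_k - δ_24` of `v^⊥`. -/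
def bB : Fin 24 → Fin 25 → ℤ := fun k j =>
  (if j.val = k.val then 1 else 0) + (if j.val = 24 then (if k.val = 0 then -5 else -1) else 0)

lemma coordB (c : Fin 24 → ℤ) (j : Fin 24) : (∑ k, c k • bB k) j.castSucc = c j := by
  simp only [Finset.sum_apply, Pi.smul_apply, smul_eq_mul, bB, Fin.coe_castSucc]
  have hj : (j : ℕ) ≠ 24 := by omega
  simp only [hj, if_false, add_zero, Fin.val_eq_val, mul_ite, mul_one, mul_zero]
  rw [Finset.sum_ite_eq Finset.univ j c]
  simp

lemma coordB24 (c : Fin 24 → ℤ) :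
    (∑ k, c k • bB k) (Fin.last 24) = -4 * c 0 - ∑ k : Fin 24, c k := by
  simp only [Finset.sum_apply, Pi.smul_apply, smul_eq_mul, bB, Fin.val_last, if_true,
    eq_self_iff_true]
  have e : ∀ k : Fin 24, c k * ((if (24:ℕ) = (k:ℕ) then 1 else 0) +
      (if (k:ℕ) = 0 then (-5:ℤ) else -1))
      = -(c k) + (if k = 0 then -4 * c k else 0) := by
    intro k
    have : (24:ℕ) ≠ (k:ℕ) := by omega
    by_cases hk : k = 0
    · subst hk; simp [this]; ring
    · have : (k:ℕ) ≠ 0 := by intro h; exact hk (Fin.ext h)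
      simp [hk, this, ‹(24:ℕ) ≠ (k:ℕ)›]
  rw [Finset.sum_congr rfl (fun k _ => e k)]
  rw [Finset.sum_add_distrib, Finset.sum_ite_eq' Finset.univ 0 (fun k => -4 * c k)]
  simp
  ring

lemma rep_exists (x : Fin 25 → ℤ) (h : lor x vA24 = 0) :
    x = ∑ k, x k.castSucc • bB k := by
  rw [lor_v] at h
  funext j
  refine Fin.lastCases ?_ ?_ j
  · rw [coordB24]
    have e1 : ∑ i : Fin 25, x i = ∑ k : Fin 24, x k.castSucc + x (Fin.last 24) :=
      Fin.sum_univ_castSucc x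
    have e2 : ∑ i : Fin 25, x i = x 0 + ∑ i : Fin 24, x i.succ := Fin.sum_univ_succ x
    have h0 : x (Fin.castSucc 0) = x 0 := rfl
    rw [h0]
    linarith [e1, e2, h]
  · intro i
    rw [coordB (fun k => x k.castSucc) i]

def Gmat : Matrix (Fin 24) (Fin 24) ℤ := Matrix.of fun k l =>
  if k.val = 0 ∧ l.val = 0 then -24
  else if k.val = 0 ∨ l.val = 0 then -5
  else if k = l then -2 else -1

def Hmat : Matrix (Fin 24) (Fin 24) ℤ := Matrix.of fun k l =>
  if k.val = 0 ∧ l.val = 0 then -24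
  else if k.val = 0 ∨ l.val = 0 then 5
  else if k = l then -2 else -1

lemma hG : (Matrix.of fun k l => lor (bB k) (bB l)) = Gmat := by decide

set_option maxHeartbeats 4000000 in
private lemma row_0 : ∀ j : Fin 24, (∑ k : Fin 24, Gmat 0 k * Hmat k j) = if (0:Fin 24) = j then 1 else 0 := by decide
set_option maxHeartbeats 4000000 in
private lemma row_1 : ∀ j : Fin 24, (∑ k : Fin 24, Gmat 1 k * Hmat k j) = if (1:Fin 24) = j then 1 else 0 := by decide
set_option maxHeartbeats 4000000 in
private lemma row_2 : ∀ j : Fin 24, (∑ k : Fin 24, Gmat 2 k * Hmat k j) = if (2:Fin 24) = j then 1 else 0 := by decide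
set_option maxHeartbeats 4000000 in
private lemma row_3 : ∀ j : Fin 24, (∑ k : Fin 24, Gmat 3 k * Hmat k j) = if (3:Fin 24) = j then 1 else 0 := by decide
set_option maxHeartbeats 4000000 in
private lemma row_4 : ∀ j : Fin 24, (∑ k : Fin 24, Gmat 4 k * Hmat k j) = if (4:Fin 24) = j then 1 else 0 := by decide
set_option maxHeartbeats 4000000 in
private lemma row_5 : ∀ j : Fin 24, (∑ k : Fin 24, Gmat 5 k * Hmat k j) = if (5:Fin 24) = j then 1 else 0 := by decide
set_option maxHeartbeats 4000000 in
private lemma row_6 : ∀ j : Fin 24, (∑ k : Fin 24, Gmat 6 k * Hmat k j) = if (6:Fin 24) = j then 1 else 0 := by decide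
set_option maxHeartbeats 4000000 in
private lemma row_7 : ∀ j : Fin 24, (∑ k : Fin 24, Gmat 7 k * Hmat k j) = if (7:Fin 24) = j then 1 else 0 := by decide
set_option maxHeartbeats 4000000 in
private lemma row_8 : ∀ j : Fin 24, (∑ k : Fin 24, Gmat 8 k * Hmat k j) = if (8:Fin 24) = j then 1 else 0 := by decide
set_option maxHeartbeats 4000000 in
private lemma row_9 : ∀ j : Fin 24, (∑ k : Fin 24, Gmat 9 k * Hmat k j) = if (9:Fin 24) = j then 1 else 0 := by decide
set_option maxHeartbeats 4000000 in
private lemma row_10 : ∀ j : Fin 24, (∑ k : Fin 24, Gmat 10 k * Hmat k j) = if (10:Fin 24) = j then 1 else 0 := by decide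
set_option maxHeartbeats 4000000 in
private lemma row_11 : ∀ j : Fin 24, (∑ k : Fin 24, Gmat 11 k * Hmat k j) = if (11:Fin 24) = j then 1 else 0 := by decide
set_option maxHeartbeats 4000000 in
private lemma row_12 : ∀ j : Fin 24, (∑ k : Fin 24, Gmat 12 k * Hmat k j) = if (12:Fin 24) = j then 1 else 0 := by decide
set_option maxHeartbeats 4000000 in
private lemma row_13 : ∀ j : Fin 24, (∑ k : Fin 24, Gmat 13 k * Hmat k j) = if (13:Fin 24) = j then 1 else 0 := by decide
set_option maxHeartbeats 4000000 in
private lemma row_14 : ∀ j : Fin 24, (∑ k : Fin 24, Gmat 14 k * Hmat k j) = if (14:Fin 24) = j then 1 else 0 := by decide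
set_option maxHeartbeats 4000000 in
private lemma row_15 : ∀ j : Fin 24, (∑ k : Fin 24, Gmat 15 k * Hmat k j) = if (15:Fin 24) = j then 1 else 0 := by decide
set_option maxHeartbeats 4000000 in
private lemma row_16 : ∀ j : Fin 24, (∑ k : Fin 24, Gmat 16 k * Hmat k j) = if (16:Fin 24) = j then 1 else 0 := by decide
set_option maxHeartbeats 4000000 in
private lemma row_17 : ∀ j : Fin 24, (∑ k : Fin 24, Gmat 17 k * Hmat k j) = if (17:Fin 24) = j then 1 else 0 := by decide
set_option maxHeartbeats 4000000 in
private lemma row_18 : ∀ j : Fin 24, (∑ k : Fin 24, Gmat 18 k * Hmat k j) = if (18:Fin 24) = j then 1 else 0 := by decide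
set_option maxHeartbeats 4000000 in
private lemma row_19 : ∀ j : Fin 24, (∑ k : Fin 24, Gmat 19 k * Hmat k j) = if (19:Fin 24) = j then 1 else 0 := by decide
set_option maxHeartbeats 4000000 in
private lemma row_20 : ∀ j : Fin 24, (∑ k : Fin 24, Gmat 20 k * Hmat k j) = if (20:Fin 24) = j then 1 else 0 := by decide
set_option maxHeartbeats 4000000 in
private lemma row_21 : ∀ j : Fin 24, (∑ k : Fin 24, Gmat 21 k * Hmat k j) = if (21:Fin 24) = j then 1 else 0 := by decide
set_option maxHeartbeats 4000000 in
private lemma row_22 : ∀ j : Fin 24, (∑ k : Fin 24, Gmat 22 k * Hmat k j) = if (22:Fin 24) = j then 1 else 0 := by decide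
set_option maxHeartbeats 4000000 in
private lemma row_23 : ∀ j : Fin 24, (∑ k : Fin 24, Gmat 23 k * Hmat k j) = if (23:Fin 24) = j then 1 else 0 := by decide

set_option maxHeartbeats 2000000 in
lemma hGH : Gmat * Hmat = 1 := by
  ext i j
  rw [Matrix.mul_apply, Matrix.one_apply]
  fin_cases i
  exacts [row_0 j, row_1 j, row_2 j, row_3 j, row_4 j, row_5 j, row_6 j, row_7 j, row_8 j, row_9 j, row_10 j, row_11 j, row_12 j, row_13 j, row_14 j, row_15 j, row_16 j, row_17 j, row_18 j, row_19 j, row_20 j, row_21 j, row_22 j, row_23 j]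

lemma detnat {n : Type*} [Fintype n] [DecidableEq n] (A B : Matrix n n ℤ)
    (h : A * B = 1) : A.det.natAbs = 1 := by
  have hu : IsUnit A.det := IsUnit.of_mul_eq_one B.det
    (by rw [← Matrix.det_mul, h, Matrix.det_one])
  rcases Int.isUnit_iff.1 hu with h | h <;> rw [h] <;> rfl

lemma part1 : lor vA24 vA24 = 1 := by decide
lemma part2 : ∀ k, lor (rA24 k) vA24 = 0 ∧ lor (rA24 k) (rA24 k) = -2 := by decide
lemma bB_orth : ∀ k, lor (bB k) vA24 = 0 := by decide

lemma part3 : ∃ f : (Fin 25 → ℤ) →ₗ[ℤ] (Fin 25 → ℤ),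
    Set.InjOn f A24Z ∧
    (∀ x ∈ A24Z, lor (f x) vA24 = 0) ∧
    (∀ x ∈ A24Z, ∀ y ∈ A24Z, lor (f x) (f y) = -(zip25 x y)) ∧
    (∀ x ∈ A24Z, f x ∈ Submodule.span ℤ (Set.range rA24)) := by
    -- the copy of -A24
  refine ⟨fmap, ?_, lor_fmap_v, lor_fmap_fmap, ?_⟩
  · intro x _ y _ h
    funext j
    refine Fin.cases ?_ ?_ j
    · have h0 := congrFun h 0
      rw [fmap_zero, fmap_zero] at h0
      linarith
    · intro i
      have h0 := congrFun h 0
      rw [fmap_zero, fmap_zero] at h0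
      have hi := congrFun h i.succ
      rw [fmap_succ, fmap_succ] at hi
      linarith
  · intro x hx
    have hxy := eq_sum_yv x hx
    have key : fmap x = ∑ j : Fin 25, x j • fmap (yv j) := by
      conv_lhs => rw [hxy]
      rw [map_sum]
      exact Finset.sum_congr rfl (fun j _ => by rw [map_smul])
    rw [key]
    exact Submodule.sum_smul_mem _ _ (fun j _ => fmap_yv_mem j)

lemma part4 : ∀ x : Fin 25 → ℤ, lor x vA24 = 0 → Even (lor x x) := by
    -- even
  intro x h
  rw [lor_v] at h
  have hsq : Even (∑ i : Fin 24, (x i.succ * x i.succ - x i.succ)) :=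
    Finset.even_sum _ (fun i _ => by
      have h2 := Int.even_mul_succ_self (x i.succ - 1)
      convert h2 using 1; rfl; ring)
  obtain ⟨b, hb⟩ := hsq
  rw [Finset.sum_sub_distrib] at hb
  have ha : Even (x 0 * x 0 - x 0) := by
    have h2 := Int.even_mul_succ_self (x 0 - 1)
    convert h2 using 1; ring
  obtain ⟨a, ha⟩ := ha
  exact ⟨a - b + 3 * x 0, by rw [lor]; linarith⟩

lemma part5 : ∀ x : Fin 25 → ℤ, lor x vA24 = 0 → x ≠ 0 → lor x x < 0 := by
    -- negative definite
  intro x h hx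
  rw [lor_v] at h
  set S1 := ∑ i : Fin 24, x i.succ with hS1
  set S2 := ∑ i : Fin 24, x i.succ * x i.succ with hS2
  have hnn : ∀ i ∈ (Finset.univ : Finset (Fin 24)), (0:ℤ) ≤ x i.succ * x i.succ :=
    fun i _ => mul_self_nonneg _
  have hS2nn : 0 ≤ S2 := Finset.sum_nonneg hnn
  by_cases h0 : S2 = 0
  · exfalso
    apply hx
    have hz' : ∀ i : Fin 24, x i.succ = 0 := by
      intro i
      have := (Finset.sum_eq_zero_iff_of_nonneg hnn).1 h0 i (Finset.mem_univ i)
      exact mul_self_eq_zero.1 this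
    have hS1z : S1 = 0 := by rw [hS1]; exact Finset.sum_eq_zero (fun i _ => hz' i)
    have hx0 : x 0 = 0 := by omega
    funext j
    refine Fin.cases ?_ ?_ j
    · exact hx0
    · exact hz'
  · have h1 : S2 ≥ 1 := lt_of_le_of_ne hS2nn (Ne.symm h0)
    have hcs := Finset.sum_mul_sq_le_sq_mul_sq Finset.univ (fun i : Fin 24 => x i.succ)
      (fun _ => (1:ℤ))
    simp only [mul_one, one_pow, Finset.sum_const, Finset.card_univ, Fintype.card_fin,
      nsmul_eq_mul] at hcs
    have hsq : ∀ i : Fin 24, x i.succ ^ 2 = x i.succ * x i.succ := fun i => pow_two (x i.succ)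
    rw [Finset.sum_congr rfl (fun i _ => hsq i)] at hcs
    have hS1e : S1 = -5 * x 0 := by linarith
    rw [← hS1, ← hS2, hS1e] at hcs
    push_cast at hcs
    have hcs' : 25 * (x 0 * x 0) ≤ 24 * S2 := by nlinarith [hcs]
    rw [lor, ← hS2]
    linarith

lemma part6 : ∃ b : Fin 24 → (Fin 25 → ℤ),
    (∀ k, lor (b k) vA24 = 0) ∧
    (∀ x : Fin 25 → ℤ, lor x vA24 = 0 → ∃! c : Fin 24 → ℤ, x = ∑ k, c k • b k) ∧
    (Matrix.of fun k l => lor (b k) (b l)).det.natAbs = 1 := by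
    -- basis and unimodularity
  refine ⟨bB, bB_orth, ?_, ?_⟩
  · intro x h
    refine ⟨fun k => x k.castSucc, rep_exists x h, ?_⟩
    intro c hc
    funext k
    have := congrFun hc k.castSucc
    rw [coordB c k] at this
    exact this.symm
  · rw [hG]
    exact detnat Gmat Hmat hGH

theorem complement_of_5_1s :
    lor vA24 vA24 = 1 ∧
    (∀ k, lor (rA24 k) vA24 = 0 ∧ lor (rA24 k) (rA24 k) = -2) ∧
    (∃ f : (Fin 25 → ℤ) →ₗ[ℤ] (Fin 25 → ℤ),
      Set.InjOn f A24Z ∧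
      (∀ x ∈ A24Z, lor (f x) vA24 = 0) ∧
      (∀ x ∈ A24Z, ∀ y ∈ A24Z, lor (f x) (f y) = -(zip25 x y)) ∧
      (∀ x ∈ A24Z, f x ∈ Submodule.span ℤ (Set.range rA24))) ∧
    (∀ x : Fin 25 → ℤ, lor x vA24 = 0 → Even (lor x x)) ∧
    (∀ x : Fin 25 → ℤ, lor x vA24 = 0 → x ≠ 0 → lor x x < 0) ∧
    (∃ b : Fin 24 → (Fin 25 → ℤ),
      (∀ k, lor (b k) vA24 = 0) ∧
      (∀ x : Fin 25 → ℤ, lor x vA24 = 0 → ∃! c : Fin 24 → ℤ, x = ∑ k, c k • b k) ∧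
      (Matrix.of fun k l => lor (b k) (b l)).det.natAbs = 1) :=
  ⟨part1, part2, part3, part4, part5, part6⟩
end
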